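/- For any fixed word s in {0,1}^n, the buffer sets satisfy B_0(s) = {ε}, and for all 1 ≤ t ≤ n, B_t(s) = { w ∘ s(t) : w ∈ B_{t-1}(s) } ∪ { tail(w) : w ∈ B_{t-1}(s), w(1) = s(t) }. -/

import Mathlib

/-- The subword of `s` indexed by the positions where `c` is `true`,
in increasing order of index. -/
def subAt {α : Type*} (s : List α) (c : ℕ → Bool) : List α :=
  ((s.zipIdx.map Prod.swap).filter (fun p => c p.1)).map Prod.snd

/-- `w` is a buffer for `s`: there is a partition `(A₁, A₂)` of the index set of `s`
(given by the indicator `c` of `A₁`) with `s(A₁) = s(A₂) ∘ w`. -/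
def IsBufferOf {α : Type*} (w s : List α) : Prop :=
  ∃ c : ℕ → Bool, subAt s c = subAt s (fun i => !(c i)) ++ w

/-- `bufferSet s t` is the set `B_t(s)` of buffers of the prefix `s[1,t]`. -/
def bufferSet {α : Type*} (s : List α) (t : ℕ) : Set (List α) :=
  {w | IsBufferOf w (s.take t)}

/-- A shuffle square: a word that can be partitioned into two disjoint identical subwords. -/
def IsShuffleSquare {α : Type*} (s : List α) : Prop := IsBufferOf [] s

lemma subAt_congr {α : Type*} {c c' : ℕ → Bool} (p : List α)
    (h : ∀ i < p.length, c i = c' i) : subAt p c = subAt p c' := by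
  unfold subAt
  congr 1
  apply List.filter_congr
  intro x hx
  obtain ⟨y, hy, rfl⟩ := List.mem_map.1 hx
  exact h y.2 (by simpa using List.snd_lt_of_mem_zipIdx hy)

lemma subAt_append_singleton {α : Type*} (p : List α) (a : α) (c : ℕ → Bool) :
    subAt (p ++ [a]) c = subAt p c ++ if c p.length then [a] else [] := by
  unfold subAt
  rw [List.zipIdx_append, List.map_append, List.filter_append, List.map_append]
  by_cases h : c p.length <;> simp [List.zipIdx_singleton, h]

/-- `B_0(s) = {ε}` and for `1 ≤ t ≤ n`,
`B_t(s) = {w ∘ s(t) : w ∈ B_{t-1}(s)} ∪ {tail(w) : w ∈ B_{t-1}(s), w(1) = s(t)}`. -/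
theorem buffer_set_recursion (n : ℕ) (s : List Bool) (hs : s.length = n) :
    bufferSet s 0 = {([] : List Bool)} ∧
    ∀ t : ℕ, 1 ≤ t → t ≤ n →
      bufferSet s t =
        {v | ∃ w ∈ bufferSet s (t - 1), v = w ++ [s.getD (t - 1) false]} ∪
        {v | ∃ w ∈ bufferSet s (t - 1),
          w.head? = some (s.getD (t - 1) false) ∧ v = w.tail} := by
  constructor
  · ext w
    simp only [bufferSet, IsBufferOf, List.take_zero, Set.mem_setOf_eq,
      Set.mem_singleton_iff]
    constructor
    · rintro ⟨c, h⟩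
      simpa [subAt] using h.symm
    · rintro rfl
      exact ⟨fun _ => true, by simp [subAt]⟩
  · intro t ht1 htn
    obtain ⟨t, rfl⟩ : ∃ u, t = u + 1 := ⟨t - 1, (Nat.succ_pred_eq_of_pos ht1).symm⟩
    simp only [Nat.add_sub_cancel]
    have htlen : t < s.length := by omega
    set a : Bool := s.getD t false with ha
    have hgd : s[t]? = some a := by
      rw [List.getElem?_eq_getElem htlen]
      simp [ha, List.getD_eq_getElem?_getD, List.getElem?_eq_getElem htlen]
    have hta : s.take (t + 1) = s.take t ++ [a] := by
      rw [List.take_succ, hgd]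
      rfl
    have hpl : (s.take t).length = t := by
      simp [List.length_take]
      omega
    ext v
    simp only [bufferSet, IsBufferOf, hta, Set.mem_setOf_eq, Set.mem_union]
    constructor
    · rintro ⟨c, h⟩
      rw [subAt_append_singleton, subAt_append_singleton, hpl] at h
      by_cases hc : c t = true
      · simp only [hc, Bool.not_true] at h
        simp only [if_true, if_neg (by simp : ¬(false : Bool) = true),
          List.append_nil] at h
        rcases v.eq_nil_or_concat with hv | ⟨v', b, hv⟩
        · subst hv
          refine Or.inr ⟨[a], ⟨fun i => !(c i), ?_⟩, rfl, rfl⟩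
          have e : subAt (s.take t) (fun i => !(!(c i))) = subAt (s.take t) c :=
            subAt_congr _ (fun i _ => by simp)
          rw [e]
          simpa using h.symm
        · rw [List.concat_eq_append] at hv
          subst hv
          rw [← List.append_assoc] at h
          obtain ⟨h1, h2⟩ := List.append_inj' h rfl
          refine Or.inl ⟨v', ⟨c, h1⟩, ?_⟩
          simp only [List.cons.injEq] at h2
          rw [h2.1]
      · simp only [Bool.not_eq_true] at hc
        simp only [hc, Bool.not_false] at h
        simp only [if_neg (by simp : ¬(false : Bool) = true), if_true,
          List.append_nil, List.append_assoc] at h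
        exact Or.inr ⟨a :: v, ⟨c, h⟩, rfl, rfl⟩
    · rintro (⟨w, ⟨c, h⟩, rfl⟩ | ⟨w, ⟨c, h⟩, hw1, rfl⟩)
      · refine ⟨fun i => if i = t then true else c i, ?_⟩
        rw [subAt_append_singleton, subAt_append_singleton, hpl]
        have e1 : subAt (s.take t) (fun i => if i = t then true else c i)
            = subAt (s.take t) c :=
          subAt_congr _ (fun i hi => by
            rw [hpl] at hi
            simp [Nat.ne_of_lt hi])
        have e2 : subAt (s.take t) (fun i => !(if i = t then true else c i))
            = subAt (s.take t) (fun i => !(c i)) :=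
          subAt_congr _ (fun i hi => by
            rw [hpl] at hi
            simp [Nat.ne_of_lt hi])
        simp only [e1, e2, if_pos rfl, Bool.not_true, h]
        simp
      · have hw : w = a :: w.tail := by
          cases w with
          | nil => simp at hw1
          | cons x xs =>
            simp only [List.head?_cons, Option.some.injEq] at hw1
            simp [hw1]
        refine ⟨fun i => if i = t then false else c i, ?_⟩
        rw [subAt_append_singleton, subAt_append_singleton, hpl]
        have e1 : subAt (s.take t) (fun i => if i = t then false else c i)
            = subAt (s.take t) c :=
          subAt_congr _ (fun i hi => by
            rw [hpl] at hi
            simp [Nat.ne_of_lt hi])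
        have e2 : subAt (s.take t) (fun i => !(if i = t then false else c i))
            = subAt (s.take t) (fun i => !(c i)) :=
          subAt_congr _ (fun i hi => by
            rw [hpl] at hi
            simp [Nat.ne_of_lt hi])
        rw [hw] at h
        simp only [e1, e2, if_pos rfl, Bool.not_false, h]
        simp
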